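/- arXiv:1708.08973 — 5 statements merged into one kernel-verified Lean document; each statement's English description precedes it below -/
import Mathlib

section
/- Let H₁ be nontrivial and L ≠ 0, and let γ > 0. The operator Id − γ L*L is a strict contraction (‖Id − γ L*L‖ < 1) if and only if both conditions hold: γ < 2/‖L‖², and there exists μ > 0 with μ‖f‖ ≤ ‖L f‖ for all f ∈ H₁. -/
open ContinuousLinearMap RCLike
open scoped InnerProductSpace

section Aux

variable {H₁ H₂ : Type*}
    [NormedAddCommGroup H₁] [InnerProductSpace ℂ H₁] [CompleteSpace H₁]
    [NormedAddCommGroup H₂] [InnerProductSpace ℂ H₂] [CompleteSpace H₂]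

lemma landweber_aux_quad (L : H₁ →L[ℂ] H₂) (γ : ℝ) (f : H₁) :
    re ⟪((1 : H₁ →L[ℂ] H₁) - γ • (L.adjoint.comp L)) f, f⟫_ℂ
      = ‖f‖ ^ 2 - γ * ‖L f‖ ^ 2 := by
  rw [sub_apply, inner_sub_left, map_sub, one_apply_eq_self, inner_self_eq_norm_sq,
    smul_apply, comp_apply, RCLike.real_smul_eq_coe_smul (K := ℂ), inner_smul_left,
    conj_ofReal, re_ofReal_mul, adjoint_inner_left, inner_self_eq_norm_sq]

set_option maxHeartbeats 1000000 in
lemma landweber_aux_sa (L : H₁ →L[ℂ] H₂) (γ : ℝ) :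
    IsSelfAdjoint ((1 : H₁ →L[ℂ] H₁) - γ • (L.adjoint.comp L)) := by
  have h1 : IsSelfAdjoint (L.adjoint.comp L) := by
    rw [ContinuousLinearMap.isSelfAdjoint_iff', adjoint_comp, adjoint_adjoint]
  rw [IsSelfAdjoint, star_sub, star_one, star_smul, star_trivial, h1.star_eq]

lemma landweber_aux_algebraMap_quad (k : ℝ) (f : H₁) :
    re ⟪(algebraMap ℝ (H₁ →L[ℂ] H₁) k) f, f⟫_ℂ = k * ‖f‖ ^ 2 := by
  rw [Algebra.algebraMap_eq_smul_one, smul_apply, one_apply_eq_self,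
    RCLike.real_smul_eq_coe_smul (K := ℂ), inner_smul_left, conj_ofReal,
    re_ofReal_mul, inner_self_eq_norm_sq]

/-- Norm bound from two-sided quadratic form bound, for self-adjoint `S`. -/
lemma landweber_aux_norm_le {H₁ : Type*} [NormedAddCommGroup H₁]
    [InnerProductSpace ℂ H₁] [CompleteSpace H₁] [Nontrivial H₁]
    {S : H₁ →L[ℂ] H₁} (hS : IsSelfAdjoint S) {k : ℝ}
    (hup : ∀ f : H₁, re ⟪S f, f⟫_ℂ ≤ k * ‖f‖ ^ 2)
    (hlo : ∀ f : H₁, -(k * ‖f‖ ^ 2) ≤ re ⟪S f, f⟫_ℂ) :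
    ‖S‖ ≤ k := by
  haveI : Nontrivial (H₁ →L[ℂ] H₁) := by
    obtain ⟨x, hx⟩ := exists_ne (0 : H₁)
    exact ⟨1, 0, fun h => hx (by simpa using DFunLike.congr_fun h x)⟩
  -- S ≤ k • 1 and -k • 1 ≤ S in Loewner order
  have hupper : S ≤ algebraMap ℝ (H₁ →L[ℂ] H₁) k := by
    rw [ContinuousLinearMap.le_def]
    refine ⟨?_, fun f => ?_⟩
    · exact (((IsSelfAdjoint.all k).algebraMap _).sub hS).isSymmetric
    · rw [reApplyInnerSelf, sub_apply, inner_sub_left, map_sub,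
        landweber_aux_algebraMap_quad]
      have := hup f
      linarith
  have hlower : algebraMap ℝ (H₁ →L[ℂ] H₁) (-k) ≤ S := by
    rw [ContinuousLinearMap.le_def]
    refine ⟨?_, fun f => ?_⟩
    · exact (hS.sub ((IsSelfAdjoint.all (-k)).algebraMap _)).isSymmetric
    · rw [reApplyInnerSelf, sub_apply, inner_sub_left, map_sub,
        landweber_aux_algebraMap_quad]
      have := hlo f
      linarith
  have hspec_up : ∀ x ∈ spectrum ℝ S, x ≤ k :=
    (le_algebraMap_iff_spectrum_le (a := S) hS).mp hupper
  have hspec_lo : ∀ x ∈ spectrum ℝ S, -k ≤ x :=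
    (algebraMap_le_iff_le_spectrum (a := S) hS).mp hlower
  rcases CStarAlgebra.norm_or_neg_norm_mem_spectrum (a := S) hS with h | h
  · exact hspec_up _ h
  · have := hspec_lo _ h
    linarith

end Aux

/-- **Characterization of strict contractivity of `Id − γ L*L`.**
For `H₁` nontrivial, `L ≠ 0` and `γ > 0`, the operator `Id − γ L*L` is a strict
contraction if and only if `γ < 2/‖L‖²` and there is a stability constant
`μ > 0` with `μ‖f‖ ≤ ‖L f‖` for all `f`. -/
theorem landweber_strict_contraction_iff
    {H₁ H₂ : Type*}
    [NormedAddCommGroup H₁] [InnerProductSpace ℂ H₁] [CompleteSpace H₁]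
    [NormedAddCommGroup H₂] [InnerProductSpace ℂ H₂] [CompleteSpace H₂]
    [Nontrivial H₁]
    (L : H₁ →L[ℂ] H₂) (hL : L ≠ 0) (γ : ℝ) (hγ : 0 < γ) :
    ‖(1 : H₁ →L[ℂ] H₁) - γ • (L.adjoint.comp L)‖ < 1 ↔
      (γ < 2 / ‖L‖ ^ 2 ∧ ∃ μ : ℝ, 0 < μ ∧ ∀ f : H₁, μ * ‖f‖ ≤ ‖L f‖) := by
  set S := (1 : H₁ →L[ℂ] H₁) - γ • (L.adjoint.comp L) with hSdef
  have hLpos : 0 < ‖L‖ := norm_pos_iff.mpr hL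
  have hquad := landweber_aux_quad L γ
  constructor
  · intro h
    -- basic bound on the quadratic form
    have hbound : ∀ f : H₁, |‖f‖ ^ 2 - γ * ‖L f‖ ^ 2| ≤ ‖S‖ * ‖f‖ ^ 2 := by
      intro f
      rw [← hquad f]
      calc |re ⟪S f, f⟫_ℂ| ≤ ‖(⟪S f, f⟫_ℂ)‖ := abs_re_le_norm _
        _ ≤ ‖S f‖ * ‖f‖ := norm_inner_le_norm _ _
        _ ≤ (‖S‖ * ‖f‖) * ‖f‖ := by
            have := S.le_opNorm f
            have : ‖S f‖ * ‖f‖ ≤ (‖S‖ * ‖f‖) * ‖f‖ :=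
              mul_le_mul_of_nonneg_right this (norm_nonneg f)
            linarith
        _ = ‖S‖ * ‖f‖ ^ 2 := by ring
    have hlow : ∀ f : H₁, (1 - ‖S‖) * ‖f‖ ^ 2 ≤ γ * ‖L f‖ ^ 2 := by
      intro f
      have := (abs_le.mp (hbound f)).2
      nlinarith [sq_nonneg ‖f‖]
    have hhigh : ∀ f : H₁, γ * ‖L f‖ ^ 2 ≤ (1 + ‖S‖) * ‖f‖ ^ 2 := by
      intro f
      have := (abs_le.mp (hbound f)).1
      nlinarith [sq_nonneg ‖f‖]
    have hSnn : 0 ≤ ‖S‖ := norm_nonneg _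
    constructor
    · -- γ * ‖L‖^2 ≤ 1 + ‖S‖ < 2
      have hLle : ‖L‖ ^ 2 ≤ (1 + ‖S‖) / γ := by
        have hb : ∀ f : H₁, ‖L f‖ ≤ Real.sqrt ((1 + ‖S‖) / γ) * ‖f‖ := by
          intro f
          have h1 : ‖L f‖ ^ 2 ≤ ((1 + ‖S‖) / γ) * ‖f‖ ^ 2 := by
            have := hhigh f
            rw [div_mul_eq_mul_div, le_div_iff₀ hγ]
            nlinarith
          have h2 : ‖L f‖ = Real.sqrt (‖L f‖ ^ 2) := (Real.sqrt_sq (norm_nonneg _)).symm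
          rw [h2]
          calc Real.sqrt (‖L f‖ ^ 2) ≤ Real.sqrt (((1 + ‖S‖) / γ) * ‖f‖ ^ 2) :=
                Real.sqrt_le_sqrt h1
            _ = Real.sqrt ((1 + ‖S‖) / γ) * ‖f‖ := by
                rw [Real.sqrt_mul (by positivity), Real.sqrt_sq (norm_nonneg _)]
        have := L.opNorm_le_bound (by positivity) hb
        calc ‖L‖ ^ 2 ≤ (Real.sqrt ((1 + ‖S‖) / γ)) ^ 2 := by
              apply pow_le_pow_left₀ (norm_nonneg _) this
          _ = (1 + ‖S‖) / γ := Real.sq_sqrt (by positivity)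
      have : γ * ‖L‖ ^ 2 ≤ 1 + ‖S‖ := by
        rw [mul_comm]
        exact (le_div_iff₀ hγ).mp hLle
      rw [lt_div_iff₀ (by positivity)]
      linarith
    · -- stability constant
      refine ⟨Real.sqrt ((1 - ‖S‖) / γ), Real.sqrt_pos.mpr (div_pos (by linarith) hγ), fun f => ?_⟩
      have h1 : ((1 - ‖S‖) / γ) * ‖f‖ ^ 2 ≤ ‖L f‖ ^ 2 := by
        have := hlow f
        rw [div_mul_eq_mul_div, div_le_iff₀ hγ]
        nlinarith
      have h2 : Real.sqrt ((1 - ‖S‖) / γ) * ‖f‖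
          = Real.sqrt (((1 - ‖S‖) / γ) * ‖f‖ ^ 2) := by
        rw [Real.sqrt_mul (le_of_lt (div_pos (by linarith) hγ)), Real.sqrt_sq (norm_nonneg _)]
      rw [h2]
      calc Real.sqrt (((1 - ‖S‖) / γ) * ‖f‖ ^ 2) ≤ Real.sqrt (‖L f‖ ^ 2) :=
            Real.sqrt_le_sqrt h1
        _ = ‖L f‖ := Real.sqrt_sq (norm_nonneg _)
  · rintro ⟨hγ2, μ, hμ, hμf⟩
    have hγL : γ * ‖L‖ ^ 2 < 2 := by
      have := (lt_div_iff₀ (by positivity : (0:ℝ) < ‖L‖ ^ 2)).mp hγ2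
      linarith
    set k := max (1 - γ * μ ^ 2) (γ * ‖L‖ ^ 2 - 1) with hk
    have hk1 : k < 1 := by
      apply max_lt
      · have : 0 < γ * μ ^ 2 := by positivity
        linarith
      · linarith
    have hSk : ‖S‖ ≤ k := by
      apply landweber_aux_norm_le (landweber_aux_sa L γ)
      · intro f
        rw [hquad f]
        have hμ2 : μ ^ 2 * ‖f‖ ^ 2 ≤ ‖L f‖ ^ 2 := by
          have h0 := hμf f
          have h1 : (0:ℝ) ≤ μ * ‖f‖ := mul_nonneg hμ.le (norm_nonneg f)
          have h2 := mul_le_mul h0 h0 h1 (norm_nonneg (L f))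
          nlinarith
        have hk_ge : 1 - γ * μ ^ 2 ≤ k := le_max_left _ _
        nlinarith [sq_nonneg ‖f‖]
      · intro f
        rw [hquad f]
        have hLf : ‖L f‖ ^ 2 ≤ ‖L‖ ^ 2 * ‖f‖ ^ 2 := by
          have := L.le_opNorm f
          nlinarith [norm_nonneg (L f), norm_nonneg f, norm_nonneg L]
        have hk_ge : γ * ‖L‖ ^ 2 - 1 ≤ k := le_max_right _ _
        nlinarith [sq_nonneg ‖f‖]
    linarith
end

section
/- If ‖Id − γ L*L‖ < 1, then there exists a unique f* ∈ H₁ solving the normal equation L*L f* = L* m, the Landweber iterates converge to f*, and the convergence is geometric: ‖f⁽ᵏ⁾ − f*‖ ≤ ‖Id − γ L*L‖^k · ‖f*‖ for every k ≥ 0. -/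
open ContinuousLinearMap Filter

/-- **Geometric convergence of the Landweber iteration under strict contractivity.**
If `‖Id − γ L*L‖ < 1`, then there is a unique `f*` solving the normal equation
`L*L f* = L* m`, the Landweber iterates converge to `f*`, and
`‖f⁽ᵏ⁾ − f*‖ ≤ ‖Id − γ L*L‖^k ‖f*‖` for every `k ≥ 0`. -/
theorem landweber_geometric_convergence
    {H₁ H₂ : Type*}
    [NormedAddCommGroup H₁] [InnerProductSpace ℂ H₁] [CompleteSpace H₁]
    [NormedAddCommGroup H₂] [InnerProductSpace ℂ H₂] [CompleteSpace H₂]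
    (L : H₁ →L[ℂ] H₂) (γ : ℝ) (hγ : 0 < γ) (m : H₂)
    (f : ℕ → H₁) (hf0 : f 0 = 0)
    (hf : ∀ k : ℕ, f (k + 1) = f k - γ • (L.adjoint (L (f k) - m)))
    (hK : ‖(1 : H₁ →L[ℂ] H₁) - γ • (L.adjoint.comp L)‖ < 1) :
    ∃ fstar : H₁,
      L.adjoint (L fstar) = L.adjoint m ∧
      (∀ g : H₁, L.adjoint (L g) = L.adjoint m → g = fstar) ∧
      Tendsto f atTop (nhds fstar) ∧
      ∀ k : ℕ, ‖f k - fstar‖ ≤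
        ‖(1 : H₁ →L[ℂ] H₁) - γ • (L.adjoint.comp L)‖ ^ k * ‖fstar‖ := by
  set T : H₁ →L[ℂ] H₁ := (1 : H₁ →L[ℂ] H₁) - γ • (L.adjoint.comp L) with hT
  set u : (H₁ →L[ℂ] H₁)ˣ := Units.oneSub T hK with hu
  have huval : (u : H₁ →L[ℂ] H₁) = γ • (L.adjoint.comp L) := by
    simp [hu, Units.oneSub, hT]
  set fstar : H₁ := (↑u⁻¹ : H₁ →L[ℂ] H₁) (γ • L.adjoint m) with hfs
  have hA : γ • (L.adjoint (L fstar)) = γ • L.adjoint m := by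
    have : ((u : H₁ →L[ℂ] H₁) * (↑u⁻¹ : H₁ →L[ℂ] H₁)) (γ • L.adjoint m)
        = γ • L.adjoint m := by rw [u.mul_inv]; rfl
    rw [ContinuousLinearMap.mul_apply] at this
    rw [← this, huval, ← hfs]
    rfl
  have hne : γ ≠ 0 := ne_of_gt hγ
  have hnormal : L.adjoint (L fstar) = L.adjoint m :=
    smul_right_injective H₁ hne hA
  -- uniqueness
  have huniq : ∀ g : H₁, L.adjoint (L g) = L.adjoint m → g = fstar := by
    intro g hg
    have h1 : (u : H₁ →L[ℂ] H₁) g = (u : H₁ →L[ℂ] H₁) fstar := by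
      rw [huval]
      show γ • (L.adjoint (L g)) = γ • (L.adjoint (L fstar))
      rw [hg, hnormal]
    have h2 : (↑u⁻¹ : H₁ →L[ℂ] H₁) ((u : H₁ →L[ℂ] H₁) g)
        = (↑u⁻¹ : H₁ →L[ℂ] H₁) ((u : H₁ →L[ℂ] H₁) fstar) := by rw [h1]
    have h3 : ∀ x : H₁, (↑u⁻¹ : H₁ →L[ℂ] H₁) ((u : H₁ →L[ℂ] H₁) x) = x := by
      intro x
      have : ((↑u⁻¹ : H₁ →L[ℂ] H₁) * (u : H₁ →L[ℂ] H₁)) x = x := by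
        rw [u.inv_mul]; rfl
      rwa [ContinuousLinearMap.mul_apply] at this
    rwa [h3, h3] at h2
  -- recurrence
  have hrec : ∀ k : ℕ, f (k + 1) - fstar = T (f k - fstar) := by
    intro k
    have hTx : ∀ x : H₁, T x = x - γ • (L.adjoint (L x)) := by
      intro x; simp [hT, sub_apply, smul_apply, comp_apply]
    rw [hf k, hTx]
    simp only [map_sub, hnormal, smul_sub]
    abel
  have hbound : ∀ k : ℕ, ‖f k - fstar‖ ≤ ‖T‖ ^ k * ‖fstar‖ := by
    intro k
    induction k with
    | zero => simp [hf0]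
    | succ n ih =>
      rw [hrec n]
      calc ‖T (f n - fstar)‖ ≤ ‖T‖ * ‖f n - fstar‖ := T.le_opNorm _
        _ ≤ ‖T‖ * (‖T‖ ^ n * ‖fstar‖) := by
            exact mul_le_mul_of_nonneg_left ih (norm_nonneg T)
        _ = ‖T‖ ^ (n + 1) * ‖fstar‖ := by ring
  -- convergence
  have htend : Tendsto f atTop (nhds fstar) := by
    rw [tendsto_iff_norm_sub_tendsto_zero]
    have h0 : Tendsto (fun k : ℕ => ‖T‖ ^ k * ‖fstar‖) atTop (nhds 0) := by
      have := tendsto_pow_atTop_nhds_zero_of_lt_one (norm_nonneg T) hK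
      simpa using this.mul_const ‖fstar‖
    exact squeeze_zero (fun k => norm_nonneg _) hbound h0
  exact ⟨fstar, hnormal, huniq, htend, hbound⟩
end

section
/- Suppose 0 < γ and γ‖L‖² < 2, and suppose the data lies in range(L) ⊕ ker(L*), i.e. m = L f₀ + w with f₀ ∈ H₁ and L* w = 0. Then the Landweber iterates converge strongly to the orthogonal projection of f₀ onto (ker L)ᗮ, which is the minimum-norm solution of the normal equation L*L f = L* m. (In particular, even when inf_{‖f‖=1}‖Lf‖ = 0, the iteration converges for such data.) -/
open ContinuousLinearMap Filter

set_option maxHeartbeats 2000000 in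
/-- **Convergence of the Landweber iteration for data in `range(L) ⊕ ker(L*)`.**
If `0 < γ`, `γ‖L‖² < 2` and `m = L f₀ + w` with `L* w = 0`, then the Landweber
iterates converge strongly to the orthogonal projection of `f₀` onto `(ker L)ᗮ`,
which is the minimum-norm solution of the normal equation `L*L f = L* m`. -/
theorem landweber_convergence_data_in_range_plus_kernel
    {H₁ H₂ : Type*}
    [NormedAddCommGroup H₁] [InnerProductSpace ℂ H₁] [CompleteSpace H₁]
    [NormedAddCommGroup H₂] [InnerProductSpace ℂ H₂] [CompleteSpace H₂]
    (L : H₁ →L[ℂ] H₂) (γ : ℝ) (hγ : 0 < γ) (hγ2 : γ * ‖L‖ ^ 2 < 2) (m : H₂)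
    (f : ℕ → H₁) (hf0 : f 0 = 0)
    (hf : ∀ k : ℕ, f (k + 1) = f k - γ • (L.adjoint (L (f k) - m)))
    (f₀ : H₁) (w : H₂) (hm : m = L f₀ + w) (hw : L.adjoint w = 0) :
    Tendsto f atTop (nhds ((Submodule.orthogonalProjection (LinearMap.ker (L : H₁ →ₗ[ℂ] H₂))ᗮ f₀ : H₁))) ∧
    L.adjoint (L ((Submodule.orthogonalProjection (LinearMap.ker (L : H₁ →ₗ[ℂ] H₂))ᗮ f₀ : H₁))) = L.adjoint m ∧
    ∀ g : H₁, L.adjoint (L g) = L.adjoint m →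
      ‖((Submodule.orthogonalProjection (LinearMap.ker (L : H₁ →ₗ[ℂ] H₂))ᗮ f₀ : H₁))‖ ≤ ‖g‖ := by
  classical
  haveI : CompleteSpace (LinearMap.ker (L : H₁ →ₗ[ℂ] H₂)) := (ContinuousLinearMap.isClosed_ker L).completeSpace_coe
  set K : Submodule ℂ H₁ := LinearMap.ker (L : H₁ →ₗ[ℂ] H₂) with hK
  set v : H₁ := (Submodule.orthogonalProjection Kᗮ f₀ : H₁) with hv
  set u : H₁ := f₀ - v with hu
  have hvK : v ∈ Kᗮ := (Submodule.orthogonalProjection Kᗮ f₀).2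
  have huK : u ∈ K := by
    have h1 : f₀ - v ∈ Kᗮᗮ := Submodule.sub_starProjection_mem_orthogonal (K := Kᗮ) f₀
    rwa [Submodule.orthogonal_orthogonal] at h1
  have hLu : L u = 0 := huK
  -- the operator A = L* L and T = 1 - γ A
  set A : H₁ →L[ℂ] H₁ := L.adjoint.comp L with hA
  set T : H₁ →L[ℂ] H₁ := 1 - γ • A with hT
  have hTapp : ∀ x : H₁, T x = x - γ • L.adjoint (L x) := by
    intro x; simp [hT, hA, sub_apply, smul_apply, one_apply]
  have hAapp : ∀ x : H₁, A x = L.adjoint (L x) := fun x => rfl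
  have hTA : ∀ x : H₁, T (A x) = A (T x) := by
    intro x
    simp only [hT, sub_apply, one_apply, smul_apply]
    rw [map_sub, map_smul_of_tower]; rfl
  clear_value T A
  -- key energy inequality
  have hB : ∀ x : H₁, ‖T x‖ ^ 2 + γ * (2 - γ * ‖L‖ ^ 2) * ‖L x‖ ^ 2 ≤ ‖x‖ ^ 2 := by
    intro x
    have hre : RCLike.re (inner ℂ x (γ • L.adjoint (L x)) : ℂ) = γ * ‖L x‖ ^ 2 := by
      rw [RCLike.real_smul_eq_coe_smul (K := ℂ), inner_smul_right, adjoint_inner_right,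
        RCLike.mul_re, RCLike.ofReal_re, RCLike.ofReal_im, inner_self_im, inner_self_eq_norm_sq]
      ring
    have h1 : ‖T x‖ ^ 2 = ‖x‖ ^ 2 - 2 * (γ * ‖L x‖ ^ 2) + ‖γ • A x‖ ^ 2 := by
      rw [hTapp, @norm_sub_sq ℂ, hre, ← hAapp]
    have h2 : ‖γ • A x‖ ≤ γ * (‖L‖ * ‖L x‖) := by
      rw [norm_smul, Real.norm_of_nonneg hγ.le, hAapp]
      gcongr
      have h3 : ‖L.adjoint (L x)‖ ≤ ‖L.adjoint‖ * ‖L x‖ := L.adjoint.le_opNorm _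
      rwa [ContinuousLinearMap.adjoint.norm_map] at h3
    have h4 : ‖γ • A x‖ ^ 2 ≤ (γ * (‖L‖ * ‖L x‖)) ^ 2 := by
      have := norm_nonneg (γ • A x); nlinarith
    nlinarith [h1, h4]
  have hc : 0 < γ * (2 - γ * ‖L‖ ^ 2) := by nlinarith
  -- contraction
  have hsq : ∀ x : H₁, ‖T x‖ ^ 2 ≤ ‖x‖ ^ 2 := by
    intro x
    linarith [hB x, mul_nonneg hc.le (sq_nonneg (‖L x‖))]
  have hcontr : ∀ x : H₁, ‖T x‖ ≤ ‖x‖ := by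
    intro x
    have h := Real.sqrt_le_sqrt (hsq x)
    rwa [Real.sqrt_sq (norm_nonneg _), Real.sqrt_sq (norm_nonneg _)] at h
  have hcontrk : ∀ (k : ℕ) (x : H₁), ‖(T ^ k) x‖ ≤ ‖x‖ := by
    intro k
    induction k with
    | zero => intro x; simp
    | succ n ih =>
      intro x
      have : (T ^ (n + 1)) x = (T ^ n) (T x) := by
        rw [pow_succ, ContinuousLinearMap.mul_apply]
      rw [this]
      exact (ih (T x)).trans (hcontr x)
  -- T commutes with A
  have hTAk : ∀ (k : ℕ) (x : H₁), (T ^ k) (A x) = A ((T ^ k) x) := by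
    intro k
    induction k with
    | zero => intro x; simp
    | succ n ih =>
      intro x
      rw [pow_succ', ContinuousLinearMap.mul_apply, ContinuousLinearMap.mul_apply, ih, hTA]
  -- ∑ ‖L (T^k x)‖² < ∞, so L (T^k x) → 0
  have hLTk : ∀ x : H₁, Tendsto (fun k : ℕ => ‖L ((T ^ k) x)‖) atTop (nhds 0) := by
    intro x
    have hsum : Summable (fun k : ℕ => ‖L ((T ^ k) x)‖ ^ 2) := by
      apply summable_of_sum_range_le (c := ‖x‖ ^ 2 / (γ * (2 - γ * ‖L‖ ^ 2)))
        (fun k => sq_nonneg _)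
      intro n
      rw [le_div_iff₀ hc, Finset.sum_mul]
      have key : ∀ k : ℕ, ‖L ((T ^ k) x)‖ ^ 2 * (γ * (2 - γ * ‖L‖ ^ 2)) ≤
          ‖(T ^ k) x‖ ^ 2 - ‖(T ^ (k + 1)) x‖ ^ 2 := by
        intro k
        have := hB ((T ^ k) x)
        have hstep : (T ^ (k + 1)) x = T ((T ^ k) x) := by
          rw [pow_succ', ContinuousLinearMap.mul_apply]
        rw [hstep]
        linarith [this]
      calc ∑ k ∈ Finset.range n, ‖L ((T ^ k) x)‖ ^ 2 * (γ * (2 - γ * ‖L‖ ^ 2))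
          ≤ ∑ k ∈ Finset.range n, (‖(T ^ k) x‖ ^ 2 - ‖(T ^ (k + 1)) x‖ ^ 2) :=
            Finset.sum_le_sum fun k _ => key k
        _ = ‖(T ^ 0) x‖ ^ 2 - ‖(T ^ n) x‖ ^ 2 := by
            rw [Finset.sum_range_sub' (fun k => ‖(T ^ k) x‖ ^ 2)]
        _ ≤ ‖x‖ ^ 2 := by
            have h0 : (T ^ 0) x = x := by simp
            rw [h0]
            have := sq_nonneg ‖(T ^ n) x‖
            linarith
    have h0 : Tendsto (fun k : ℕ => ‖L ((T ^ k) x)‖ ^ 2) atTop (nhds 0) :=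
      hsum.tendsto_atTop_zero
    have h1 := h0.sqrt
    rw [Real.sqrt_zero] at h1
    have heq : (fun k : ℕ => Real.sqrt (‖L ((T ^ k) x)‖ ^ 2)) =
        fun k : ℕ => ‖L ((T ^ k) x)‖ := by
      funext k; exact Real.sqrt_sq (norm_nonneg _)
    rwa [heq] at h1
  -- T^k (A x) → 0
  have hTAk0 : ∀ x : H₁, Tendsto (fun k : ℕ => (T ^ k) (A x)) atTop (nhds 0) := by
    intro x
    have hg : Tendsto (fun k : ℕ => ‖L‖ * ‖L ((T ^ k) x)‖) atTop (nhds 0) := by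
      have h5 := (hLTk x).const_mul ‖L‖
      simpa using h5
    refine squeeze_zero_norm (fun k => ?_) hg
    rw [hTAk k x, hAapp]
    have h3 : ‖L.adjoint (L ((T ^ k) x))‖ ≤ ‖L.adjoint‖ * ‖L ((T ^ k) x)‖ :=
      L.adjoint.le_opNorm _
    rwa [ContinuousLinearMap.adjoint.norm_map] at h3
  -- density: Kᗮ ⊆ closure (range A)
  set R : Submodule ℂ H₁ := LinearMap.range (A : H₁ →ₗ[ℂ] H₁) with hR
  have hRK : Rᗮ ≤ K := by
    intro z hz
    have h1 : (inner ℂ (A z) z : ℂ) = 0 := hz (A z) ⟨z, rfl⟩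
    have h2 : (inner ℂ (A z) z : ℂ) = inner ℂ (L z) (L z) := by
      rw [hAapp, adjoint_inner_left]
    rw [h2] at h1
    have : L z = 0 := by
      rw [inner_self_eq_zero] at h1; exact h1
    exact this
  have hdense : (Kᗮ : Set H₁) ⊆ closure (R : Set H₁) := by
    have h1 : Kᗮ ≤ Rᗮᗮ := Submodule.orthogonal_le hRK
    rw [Submodule.orthogonal_orthogonal_eq_closure] at h1
    intro z hz
    have := h1 hz
    rwa [← R.topologicalClosure_coe]
  -- T^k v → 0
  have hTv : Tendsto (fun k : ℕ => (T ^ k) v) atTop (nhds 0) := by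
    rw [Metric.tendsto_atTop]
    intro ε hε
    obtain ⟨y, hyR, hyd⟩ := Metric.mem_closure_iff.mp (hdense hvK) (ε / 2) (by linarith)
    obtain ⟨x, hx⟩ := hyR
    obtain ⟨N, hN⟩ := Metric.tendsto_atTop.mp (hTAk0 x) (ε / 2) (by linarith)
    refine ⟨N, fun n hn => ?_⟩
    rw [dist_eq_norm, sub_zero]
    have h1 : (T ^ n) v = (T ^ n) (v - y) + (T ^ n) y := by
      rw [← map_add, sub_add_cancel]
    have h4 : ‖(T ^ n) y‖ < ε / 2 := by
      have h5 := hN n hn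
      rw [dist_eq_norm, sub_zero] at h5
      rw [← hx]
      exact h5
    have h2 : ‖(T ^ n) (v - y)‖ ≤ ‖v - y‖ := hcontrk n _
    have h3 : ‖v - y‖ < ε / 2 := by rw [← dist_eq_norm]; exact hyd
    calc ‖(T ^ n) v‖ ≤ ‖(T ^ n) (v - y)‖ + ‖(T ^ n) y‖ := by
          rw [h1]; exact norm_add_le _ _
      _ < ε / 2 + ε / 2 := add_lt_add_of_le_of_lt (h2.trans h3.le) h4
      _ = ε := by ring
  -- explicit formula for iterates
  have hAu : A u = 0 := by rw [hAapp, hLu, map_zero]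
  have hfk : ∀ k : ℕ, f k = v - (T ^ k) v := by
    intro k
    induction k with
    | zero => simp [hf0]
    | succ n ih =>
      have hLfm : L.adjoint (L (f n) - m) = A (f n) - A f₀ := by
        rw [hm, map_sub, map_add, hw, add_zero, hAapp, hAapp]
      have hAfn : A (f n) - A f₀ = -A ((T ^ n) v) := by
        rw [ih, map_sub]
        have : A f₀ = A u + A v := by rw [← map_add]; congr 1; rw [hu]; abel
        rw [this, hAu, zero_add]
        abel
      rw [hf n, hLfm, hAfn, ih]
      have hstep : (T ^ (n + 1)) v = T ((T ^ n) v) := by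
        rw [pow_succ', ContinuousLinearMap.mul_apply]
      rw [hstep, hTapp, ← hAapp]
      rw [smul_neg]
      abel
  refine ⟨?_, ?_, ?_⟩
  · have : Tendsto (fun k => v - (T ^ k) v) atTop (nhds (v - 0)) :=
      tendsto_const_nhds.sub hTv
    rw [sub_zero] at this
    exact this.congr fun k => (hfk k).symm
  · have hLv : L v = L f₀ := by
      have : f₀ = u + v := by rw [hu]; abel
      rw [this, map_add, hLu, zero_add]
    rw [hLv, hm, map_add, hw, add_zero]
  · intro g hg
    have hgf : g - f₀ ∈ K := by
      have h1 : A (g - f₀) = 0 := by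
        rw [map_sub, hAapp, hAapp, hg, hm, map_add, hw, add_zero]
        exact sub_self _
      have h2 : (inner ℂ (L (g - f₀)) (L (g - f₀)) : ℂ) = 0 := by
        rw [← adjoint_inner_left, ← hAapp, h1, inner_zero_left]
      rw [inner_self_eq_zero] at h2
      exact h2
    have hgv : g - v ∈ K := by
      have : g - v = (g - f₀) + u := by rw [hu]; abel
      rw [this]
      exact K.add_mem hgf huK
    have h0 : (inner ℂ (g - v) v : ℂ) = 0 := (Submodule.mem_orthogonal K v).mp hvK _ hgv
    have hinner : (inner ℂ v (g - v) : ℂ) = 0 := inner_eq_zero_symm.mpr h0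
    have hpyth : ‖v + (g - v)‖ * ‖v + (g - v)‖ = ‖v‖ * ‖v‖ + ‖g - v‖ * ‖g - v‖ :=
      norm_add_sq_eq_norm_sq_add_norm_sq_of_inner_eq_zero v (g - v) hinner
    have hvg : v + (g - v) = g := by abel
    rw [hvg] at hpyth
    nlinarith [norm_nonneg (g - v), norm_nonneg g, norm_nonneg v]
end

section
/- (Unitary case.) If F is unitary, i.e. F*F = Id on H₁ and F F* = Id on H₂, then for any (f₁, f₂) ∈ H₁ × H₂ the unique minimum-norm element of the affine set {(f₁ + h, f₂ − F h) : h ∈ H₁} equals (½(f₁ + F* f₂), ½(f₂ + F f₁)); i.e. the reconstruction keeps half of each original and transforms the other half into the mirror-image artifact. -/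
open ContinuousLinearMap
open scoped ComplexInnerProductSpace

/-- The element `(x, y)` of the Hilbert space `H₁ ×₂ H₂` (the product with the
inner product `⟨(u₁,u₂),(v₁,v₂)⟩ = ⟨u₁,v₁⟩ + ⟨u₂,v₂⟩`). -/
noncomputable def pairL2 {H₁ H₂ : Type*} (x : H₁) (y : H₂) : WithLp 2 (H₁ × H₂) :=
  (WithLp.equiv 2 (H₁ × H₂)).symm (x, y)

lemma pairL2_norm_sq {H₁ H₂ : Type*}
    [NormedAddCommGroup H₁] [NormedAddCommGroup H₂] (x : H₁) (y : H₂) :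
    ‖pairL2 x y‖ ^ 2 = ‖x‖ ^ 2 + ‖y‖ ^ 2 := by
  rw [WithLp.prod_norm_sq_eq_of_L2]
  rfl

/-- **Unitary case: half of the original and half mirror-image artifact.**
If `F` is unitary (`F*F = Id`, `F F* = Id`), then the unique minimum-norm
element of the affine set `{(f₁ + h, f₂ − F h) : h ∈ H₁}` equals
`(½(f₁ + F* f₂), ½(f₂ + F f₁))`. -/
theorem minimum_norm_solution_unitary_case
    {H₁ H₂ : Type*}
    [NormedAddCommGroup H₁] [InnerProductSpace ℂ H₁] [CompleteSpace H₁]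
    [NormedAddCommGroup H₂] [InnerProductSpace ℂ H₂] [CompleteSpace H₂]
    (F : H₁ →L[ℂ] H₂)
    (hFF : F.adjoint.comp F = (1 : H₁ →L[ℂ] H₁))
    (hFF' : F.comp F.adjoint = (1 : H₂ →L[ℂ] H₂))
    (f₁ : H₁) (f₂ : H₂) :
    (∃ h : H₁,
      pairL2 ((2 : ℂ)⁻¹ • (f₁ + F.adjoint f₂)) ((2 : ℂ)⁻¹ • (f₂ + F f₁)) =
        pairL2 (f₁ + h) (f₂ - F h)) ∧
    (∀ h : H₁,
      ‖pairL2 ((2 : ℂ)⁻¹ • (f₁ + F.adjoint f₂)) ((2 : ℂ)⁻¹ • (f₂ + F f₁))‖ ≤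
        ‖pairL2 (f₁ + h) (f₂ - F h)‖) ∧
    (∀ h : H₁,
      ‖pairL2 (f₁ + h) (f₂ - F h)‖ =
        ‖pairL2 ((2 : ℂ)⁻¹ • (f₁ + F.adjoint f₂)) ((2 : ℂ)⁻¹ • (f₂ + F f₁))‖ →
      pairL2 (f₁ + h) (f₂ - F h) =
        pairL2 ((2 : ℂ)⁻¹ • (f₁ + F.adjoint f₂)) ((2 : ℂ)⁻¹ • (f₂ + F f₁))) := by
  set a := (2 : ℂ)⁻¹ • (f₁ + F.adjoint f₂) with ha
  set b := (2 : ℂ)⁻¹ • (f₂ + F f₁) with hb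
  set h₀ := (2 : ℂ)⁻¹ • (F.adjoint f₂ - f₁) with hh₀
  have hFFapp : ∀ x : H₁, F.adjoint (F x) = x := fun x => by
    have := ContinuousLinearMap.ext_iff.mp hFF x
    simpa using this
  have hFF'app : ∀ y : H₂, F (F.adjoint y) = y := fun y => by
    have := ContinuousLinearMap.ext_iff.mp hFF' y
    simpa using this
  have ha0 : a = f₁ + h₀ := by
    rw [ha, hh₀]; module
  have hb0 : b = f₂ - F h₀ := by
    rw [hb, hh₀, map_smul, map_sub, hFF'app]; module
  -- key norm identity
  have key : ∀ h : H₁, ‖pairL2 (f₁ + h) (f₂ - F h)‖ ^ 2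
      = ‖pairL2 a b‖ ^ 2 + 2 * ‖h - h₀‖ ^ 2 := by
    intro h
    set u := h - h₀ with hu
    have e1 : f₁ + h = a + u := by rw [ha0, hu]; abel
    have e2 : f₂ - F h = b - F u := by
      rw [hb0, hu, map_sub]; abel
    have hFnorm : ‖F u‖ = ‖u‖ := by
      have : ⟪F u, F u⟫ = ⟪u, u⟫ := by
        rw [← ContinuousLinearMap.adjoint_inner_left, hFFapp]
      have h2 : (‖F u‖ : ℂ) ^ 2 = (‖u‖ : ℂ) ^ 2 := by
        rwa [inner_self_eq_norm_sq_to_K, inner_self_eq_norm_sq_to_K] at this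
      have := congrArg Complex.re h2
      simp only [← Complex.ofReal_pow, Complex.ofReal_re] at this
      nlinarith [norm_nonneg (F u), norm_nonneg u]
    have hadj : F.adjoint b = a := by
      rw [hb, ha, map_smul, map_add, hFFapp]; module
    have hcross : ⟪F u, b⟫ = ⟪u, a⟫ := by
      rw [← ContinuousLinearMap.adjoint_inner_right, hadj]
    rw [e1, e2, pairL2_norm_sq, pairL2_norm_sq,
      norm_add_sq (𝕜 := ℂ) a u, norm_sub_sq (𝕜 := ℂ) b (F u)]
    have hre : RCLike.re ⟪b, F u⟫ = RCLike.re ⟪a, u⟫ := by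
      have hc := congrArg (starRingEnd ℂ) hcross
      rw [inner_conj_symm, inner_conj_symm] at hc
      rw [hc]
    rw [hre, hFnorm]
    ring
  have habpos : (0:ℝ) ≤ ‖pairL2 a b‖ := norm_nonneg _
  refine ⟨⟨h₀, by rw [← ha0, ← hb0]⟩, ?_, ?_⟩
  · intro h
    have hk := key h
    have hsq : ‖pairL2 a b‖ ^ 2 ≤ ‖pairL2 (f₁ + h) (f₂ - F h)‖ ^ 2 := by
      rw [hk]; nlinarith [sq_nonneg ‖h - h₀‖]
    exact (pow_le_pow_iff_left₀ habpos (norm_nonneg _) two_ne_zero).mp hsq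
  · intro h hnorm
    have hk := key h
    rw [hnorm] at hk
    have hsq0 : ‖h - h₀‖ ^ 2 = 0 := by linarith
    have hu0 : ‖h - h₀‖ = 0 := by
      exact pow_eq_zero_iff two_ne_zero |>.mp hsq0
    have : h = h₀ := by
      have := norm_eq_zero.mp hu0
      linear_combination (norm := abel_nf) this
    rw [this, ← ha0, ← hb0]
end

section
/- (Positive attenuation makes the microlocal system solvable.) If t₁ < t₂ and the attenuation is positive between the conjugate points, i.e. a(s) > 0 for all s ∈ [t₁, t₂], then det Q < 0; in particular Q is invertible and the pair of singularities at the conjugate points can be resolved from the data in the two orientations. -/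
open intervalIntegral

/-- **Positive attenuation makes the microlocal system solvable.**
If `t₁ < t₂` and the attenuation is positive between the conjugate points,
`a > 0` on `[t₁, t₂]`, then `det Q < 0`; in particular the matrix `Q` of
microlocal weights is invertible. -/
theorem positive_attenuation_detQ_neg
    (a : ℝ → ℝ) (ha : Continuous a)
    (T t₁ t₂ : ℝ) (h0 : 0 ≤ t₁) (h12 : t₁ < t₂) (h2T : t₂ ≤ T)
    (hpos : ∀ s ∈ Set.Icc t₁ t₂, 0 < a s) :
    (!![Real.exp (-∫ s in t₁..T, a s), Real.exp (-∫ s in t₂..T, a s);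
        Real.exp (-∫ s in (0 : ℝ)..t₁, a s),
        Real.exp (-∫ s in (0 : ℝ)..t₂, a s)] : Matrix (Fin 2) (Fin 2) ℝ).det < 0 ∧
    IsUnit
      (!![Real.exp (-∫ s in t₁..T, a s), Real.exp (-∫ s in t₂..T, a s);
          Real.exp (-∫ s in (0 : ℝ)..t₁, a s),
          Real.exp (-∫ s in (0 : ℝ)..t₂, a s)] : Matrix (Fin 2) (Fin 2) ℝ) := by
  have hint : ∀ u v : ℝ, IntervalIntegrable a MeasureTheory.volume u v :=
    fun u v => ha.intervalIntegrable u v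
  have hI : 0 < ∫ s in t₁..t₂, a s := by
    apply intervalIntegral.intervalIntegral_pos_of_pos_on (hint t₁ t₂)
      (fun s hs => hpos s ⟨le_of_lt hs.1, le_of_lt hs.2⟩) h12
  have hadd1 : (∫ s in t₁..t₂, a s) + (∫ s in t₂..T, a s) = ∫ s in t₁..T, a s :=
    intervalIntegral.integral_add_adjacent_intervals (hint t₁ t₂) (hint t₂ T)
  have hadd2 : (∫ s in (0:ℝ)..t₁, a s) + (∫ s in t₁..t₂, a s) = ∫ s in (0:ℝ)..t₂, a s :=
    intervalIntegral.integral_add_adjacent_intervals (hint 0 t₁) (hint t₁ t₂)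
  have hdet : (!![Real.exp (-∫ s in t₁..T, a s), Real.exp (-∫ s in t₂..T, a s);
        Real.exp (-∫ s in (0 : ℝ)..t₁, a s),
        Real.exp (-∫ s in (0 : ℝ)..t₂, a s)] : Matrix (Fin 2) (Fin 2) ℝ).det < 0 := by
    rw [Matrix.det_fin_two_of]
    rw [← Real.exp_add, ← Real.exp_add]
    apply sub_neg.mpr
    apply Real.exp_lt_exp.mpr
    rw [← hadd1, ← hadd2]
    linarith
  refine ⟨hdet, ?_⟩
  rw [Matrix.isUnit_iff_isUnit_det]
  exact (ne_of_lt hdet).isUnit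
end
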